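/- Let d ≥ 1 be an integer, 0 < s < 1, m > 0, and let ψ be a Schwartz function on ℝ^d. Then for every x ∈ ℝ^d, s·(2π)^{-d} ∫_{ℝ^d}(|k|²+m²)^{s−1} ψ̂(k) e^{ik·x} dk = ∫_{ℝ^d} G(x−y) ψ(y) dy, where ψ̂(k)=∫_{ℝ^d}ψ(x)e^{-ik·x}dx and G(z) = (s/(c_s(2π)^d)) ∫₀^∞ λ^{−(2s+d)/2} e^{−πλm²} e^{−|z|²/(4πλ)} dλ with c_s = Γ(1−s)/π^{1−s}. -/

import Mathlib

open MeasureTheory Real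

noncomputable section

namespace Statement15

variable (d : ℕ)

/-- Fourier transform with the convention `ψ̂(k) = ∫ ψ(x) e^{-i k·x} dx`. -/
def ft (φ : EuclideanSpace ℝ (Fin d) → ℂ) (k : EuclideanSpace ℝ (Fin d)) : ℂ :=
  ∫ x, φ x * Complex.exp (-(Complex.I * ((inner ℝ x k : ℝ) : ℂ)))

/-- The kernel
`G(z) = (s/(c_s(2π)^d)) ∫₀^∞ λ^{−(2s+d)/2} e^{−πλm²} e^{−|z|²/(4πλ)} dλ`,
`c_s = Γ(1−s)/π^{1−s}`. -/
def Gker (s m : ℝ) (z : EuclideanSpace ℝ (Fin d)) : ℝ :=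
  (s / ((Real.Gamma (1 - s) / π ^ (1 - s)) * (2 * π) ^ d)) *
    ∫ l in Set.Ioi (0 : ℝ),
      l ^ (-(2 * s + (d : ℝ)) / 2) * Real.exp (-(π * l * m ^ 2)) *
        Real.exp (-‖z‖ ^ 2 / (4 * π * l))

section helpers
open Set Filter

local notation "E" => EuclideanSpace ℝ (Fin d)

lemma ft_eq (ψ : SchwartzMap (EuclideanSpace ℝ (Fin d)) ℂ) (k : EuclideanSpace ℝ (Fin d)) :
    ft d (fun y => ψ y) k = FourierTransform.fourier (fun y : E => ψ y) ((2 * π)⁻¹ • k) := by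
  rw [Real.fourier_eq']
  unfold ft
  congr 1
  funext v
  have h : (-2 * π * (inner ℝ v ((2 * π)⁻¹ • k) : ℝ)) = -(inner ℝ v k : ℝ) := by
    rw [real_inner_smul_right]
    have : (2 * π) ≠ 0 := by positivity
    field_simp
  rw [h, smul_eq_mul, mul_comm]
  congr 1
  push_cast
  ring_nf

lemma ft_integrable (ψ : SchwartzMap (EuclideanSpace ℝ (Fin d)) ℂ) :
    Integrable (ft d (fun y => ψ y)) volume := by
  have h1 : Integrable (FourierTransform.fourier (fun y : E => ψ y)) volume := by
    have := (SchwartzMap.fourierTransformCLM ℝ ψ).integrable (μ := volume)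
    exact this
  have h2 : ((2 * π)⁻¹ : ℝ) ≠ 0 := by positivity
  have h3 := (integrable_comp_smul_iff (volume : Measure E)
    (FourierTransform.fourier (fun y : E => ψ y)) h2).2 h1
  exact h3.congr (Filter.Eventually.of_forall fun k => (ft_eq d ψ k).symm)

lemma ft_continuous (ψ : SchwartzMap (EuclideanSpace ℝ (Fin d)) ℂ) :
    Continuous (ft d (fun y => ψ y)) := by
  have h1 : Continuous (FourierTransform.fourier (fun y : E => ψ y)) := by
    have := (SchwartzMap.fourierTransformCLM ℝ ψ).continuous
    exact this
  have h2 : Continuous fun k : E => ((2 * π)⁻¹ : ℝ) • k := continuous_const_smul _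
  have := h1.comp h2
  refine this.congr fun k => ?_
  exact (ft_eq d ψ k).symm

/-- Gaussian integral with oscillation. -/
lemma gauss_int {t : ℝ} (ht : 0 < t) (z : EuclideanSpace ℝ (Fin d)) :
    (∫ k : EuclideanSpace ℝ (Fin d),
        Complex.exp (-(t : ℂ) * (‖k‖ : ℂ) ^ 2 + Complex.I * ((inner ℝ z k : ℝ) : ℂ)))
      = (((π / t) ^ ((d : ℝ) / 2) : ℝ) : ℂ) *
          Complex.exp (-((‖z‖ ^ 2 / (4 * t) : ℝ) : ℂ)) := by
  have hb : 0 < ((t : ℂ)).re := by simpa using ht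
  have := GaussianFourier.integral_cexp_neg_mul_sq_norm_add (V := E) hb Complex.I z
  rw [finrank_euclideanSpace_fin] at this
  rw [this]
  congr 1
  · rw [Complex.ofReal_cpow (by positivity : (0:ℝ) ≤ π / t)]
    push_cast
    ring_nf
  · rw [Complex.I_sq]
    push_cast
    ring_nf


lemma gauss_integrable {b : ℝ} (hb : 0 < b) :
    Integrable (fun v : E => rexp (-(b * ‖v‖ ^ 2))) volume := by
  have hb' : 0 < ((b : ℂ)).re := by simpa using hb
  have h := (GaussianFourier.integrable_cexp_neg_mul_sq_norm_add (V := E) hb' 0 0).norm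
  refine h.congr (Filter.Eventually.of_forall fun v => ?_)
  have harg : (-(b : ℂ) * (‖v‖ : ℂ) ^ 2 + 0 * ((inner ℝ (0 : E) v : ℝ) : ℂ))
      = ((-(b * ‖v‖ ^ 2) : ℝ) : ℂ) := by push_cast; ring
  simp only [harg, Complex.norm_exp, Complex.ofReal_re]

lemma gauss_shift_integrable {b : ℝ} (hb : 0 < b) (x : EuclideanSpace ℝ (Fin d)) :
    Integrable (fun y : E => rexp (-(b * ‖x - y‖ ^ 2))) volume := by
  have h := gauss_integrable d hb
  have e : MeasurePreserving (fun y : E => x - y) volume volume :=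
    Measure.measurePreserving_sub_left volume x
  have emb : MeasurableEmbedding (fun y : E => x - y) :=
    (MeasurableEquiv.subLeft x).measurableEmbedding
  exact (e.integrable_comp_emb emb).2 h

lemma gauss_integral_val {t : ℝ} (ht : 0 < t) (x : EuclideanSpace ℝ (Fin d)) :
    ∫ y : E, rexp (-(‖x - y‖ ^ 2 / (4 * t))) = (4 * π * t) ^ ((d : ℝ) / 2) := by
  have h := integral_sub_left_eq_self (fun v : E => rexp (-(‖v‖ ^ 2 / (4 * t)))) volume x
  rw [h]
  have harg : ∀ v : E, -(‖v‖ ^ 2 / (4 * t)) = -((4 * t)⁻¹ * ‖v‖ ^ 2) := by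
    intro v; field_simp
  simp_rw [harg]
  have h4t : (0 : ℝ) < (4 * t)⁻¹ := by positivity
  have hgv := GaussianFourier.integral_rexp_neg_mul_sq_norm (V := E) h4t
  simp_rw [neg_mul] at hgv
  rw [hgv, finrank_euclideanSpace_fin]
  congr 1
  field_simp

lemma aux_int {a b : ℝ} (ha : -1 < a) (ha' : a ≤ 0) (hb : 0 < b) :
    IntegrableOn (fun t : ℝ => t ^ a * rexp (-(b * t))) (Set.Ioi (0 : ℝ)) volume := by
  rw [← Ioc_union_Ioi_eq_Ioi (zero_le_one (α := ℝ))]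
  refine IntegrableOn.union ?_ ?_
  · have h1 : IntegrableOn (fun t : ℝ => t ^ a) (Ioc (0 : ℝ) 1) volume :=
      ((intervalIntegral.integrableOn_Ioo_rpow_iff (s := a) zero_lt_one).2 ha).congr_set_ae
        Ioo_ae_eq_Ioc.symm
    refine Integrable.mono' h1 ?_ ?_
    · apply AEStronglyMeasurable.restrict
      apply Measurable.aestronglyMeasurable
      fun_prop
    · rw [ae_restrict_iff' measurableSet_Ioc]
      refine Filter.Eventually.of_forall fun t ht => ?_
      have h0 : (0 : ℝ) < t := ht.1
      have he : rexp (-(b * t)) ≤ 1 := by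
        rw [Real.exp_le_one_iff]
        nlinarith
      have hpos : 0 ≤ t ^ a * rexp (-(b * t)) := by positivity
      rw [Real.norm_of_nonneg hpos]
      calc t ^ a * rexp (-(b * t)) ≤ t ^ a * 1 := by
            exact mul_le_mul_of_nonneg_left he (by positivity)
        _ = t ^ a := by ring
  · refine Integrable.mono' ((exp_neg_integrableOn_Ioi 1 hb)) ?_ ?_
    · apply AEStronglyMeasurable.restrict
      apply Measurable.aestronglyMeasurable
      fun_prop
    · rw [ae_restrict_iff' measurableSet_Ioi]
      refine Filter.Eventually.of_forall fun t ht => ?_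
      have h1t : (1 : ℝ) ≤ t := le_of_lt ht
      have h0 : (0 : ℝ) < t := lt_of_lt_of_le zero_lt_one h1t
      have hr : t ^ a ≤ 1 := Real.rpow_le_one_of_one_le_of_nonpos h1t ha'
      have hpos : 0 ≤ t ^ a * rexp (-(b * t)) := by positivity
      rw [Real.norm_of_nonneg hpos, neg_mul]
      calc t ^ a * rexp (-(b * t)) ≤ 1 * rexp (-(b * t)) := by
            exact mul_le_mul_of_nonneg_right hr (Real.exp_nonneg _)
        _ = rexp (-(b * t)) := by ring

lemma gamma_inv {s : ℝ} (hs1 : s < 1) {a : ℝ} (hA : 0 < a) :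
    a ^ (s - 1) = (Real.Gamma (1 - s))⁻¹ * ∫ t in Ioi (0 : ℝ), t ^ (-s) * rexp (-(a * t)) := by
  have h : ∫ t in Ioi (0 : ℝ), t ^ ((1 - s) - 1) * rexp (-(a * t))
      = (1 / a) ^ (1 - s) * Real.Gamma (1 - s) :=
    Real.integral_rpow_mul_exp_neg_mul_Ioi (by linarith) hA
  have hexp : ((1 - s) - 1 : ℝ) = -s := by ring
  rw [hexp] at h
  rw [h]
  have hΓ : Real.Gamma (1 - s) ≠ 0 := (Real.Gamma_pos_of_pos (by linarith)).ne'
  rw [one_div, Real.inv_rpow hA.le, ← Real.rpow_neg hA.le,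
    show -(1 - s) = s - 1 by ring]
  field_simp

lemma kernel_eq (s m : ℝ) (hs0 : 0 < s) (hs1 : s < 1) (z : EuclideanSpace ℝ (Fin d)) :
    s * ((2 * π) ^ d)⁻¹ * (Real.Gamma (1 - s))⁻¹ *
      ∫ t in Ioi (0 : ℝ), t ^ (-s) * rexp (-(m ^ 2 * t)) *
        ((π / t) ^ ((d : ℝ) / 2) * rexp (-(‖z‖ ^ 2 / (4 * t))))
      = Gker d s m z := by
  have hπ : (0 : ℝ) < π := pi_pos
  set g : ℝ → ℝ := fun t => t ^ (-s) * rexp (-(m ^ 2 * t)) *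
    ((π / t) ^ ((d : ℝ) / 2) * rexp (-(‖z‖ ^ 2 / (4 * t)))) with hg
  have hsub := MeasureTheory.integral_comp_mul_left_Ioi g 0 hπ
  rw [mul_zero] at hsub
  have h2 : ∫ t in Ioi (0 : ℝ), g t = π * ∫ l in Ioi (0 : ℝ), g (π * l) := by
    rw [hsub, smul_eq_mul]
    field_simp
  rw [h2]
  have h3 : ∀ l ∈ Ioi (0 : ℝ), g (π * l) = π ^ (-s) *
      (l ^ (-(2 * s + (d : ℝ)) / 2) * rexp (-(π * l * m ^ 2)) * rexp (-‖z‖ ^ 2 / (4 * π * l))) := by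
    intro l hl
    have hl0 : (0 : ℝ) < l := hl
    have e1 : (π * l) ^ (-s) = π ^ (-s) * l ^ (-s) := Real.mul_rpow hπ.le hl0.le
    have e2 : π / (π * l) = l⁻¹ := by field_simp
    have e3 : (π / (π * l)) ^ ((d : ℝ) / 2) = l ^ (-((d : ℝ) / 2)) := by
      rw [e2, Real.inv_rpow hl0.le, ← Real.rpow_neg hl0.le]
    have e4 : l ^ (-s) * l ^ (-((d : ℝ) / 2)) = l ^ (-(2 * s + (d : ℝ)) / 2) := by
      rw [← Real.rpow_add hl0]; congr 1; ring
    have e5 : -(m ^ 2 * (π * l)) = -(π * l * m ^ 2) := by ring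
    have e6 : -(‖z‖ ^ 2 / (4 * (π * l))) = -‖z‖ ^ 2 / (4 * π * l) := by ring
    simp only [hg]
    rw [e1, e3, e5, e6, ← e4]
    ring
  rw [setIntegral_congr_fun measurableSet_Ioi h3, integral_const_mul]
  rw [Gker]
  have hps : π * π ^ (-s) = π ^ (1 - s) := by
    rw [show (1 - s : ℝ) = 1 + -s by ring, Real.rpow_add hπ, Real.rpow_one]
  have hΓ : Real.Gamma (1 - s) ≠ 0 := (Real.Gamma_pos_of_pos (by linarith)).ne'
  have h2π : ((2 * π) ^ d : ℝ) ≠ 0 := by positivity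
  have hπs : π ^ (1 - s) ≠ 0 := by positivity
  rw [← hps]
  field_simp
  ring_nf
  congr 1; funext l; ring_nf


lemma step_k {t : ℝ} (ht : 0 < t) (ψ : SchwartzMap (EuclideanSpace ℝ (Fin d)) ℂ)
    (x : EuclideanSpace ℝ (Fin d)) :
    (∫ k : E, ((rexp (-(t * ‖k‖ ^ 2)) : ℝ) : ℂ) * ft d (fun y => ψ y) k *
        Complex.exp (Complex.I * ((inner ℝ k x : ℝ) : ℂ)))
      = ∫ y : E, ((((π / t) ^ ((d : ℝ) / 2) * rexp (-(‖x - y‖ ^ 2 / (4 * t)))) : ℝ) : ℂ) * ψ y := by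
  have h1 : ∀ k : E, ((rexp (-(t * ‖k‖ ^ 2)) : ℝ) : ℂ) * ft d (fun y => ψ y) k *
      Complex.exp (Complex.I * ((inner ℝ k x : ℝ) : ℂ))
      = ∫ y : E, ψ y * Complex.exp (-(t : ℂ) * (‖k‖ : ℂ) ^ 2
          + Complex.I * ((inner ℝ (x - y) k : ℝ) : ℂ)) := by
    intro k
    unfold ft
    rw [mul_comm (((rexp (-(t * ‖k‖ ^ 2)) : ℝ) : ℂ)) _, mul_assoc, ← integral_mul_const]
    refine integral_congr_ae (Filter.Eventually.of_forall fun y => ?_)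
    beta_reduce
    rw [mul_assoc]
    congr 1
    rw [Complex.ofReal_exp, ← Complex.exp_add, ← Complex.exp_add]
    congr 1
    have hsub : (inner ℝ (x - y) k : ℝ) = (inner ℝ x k : ℝ) - (inner ℝ y k : ℝ) :=
      inner_sub_left _ _ _
    have hc : (inner ℝ k x : ℝ) = (inner ℝ x k : ℝ) := real_inner_comm _ _
    rw [hsub, hc]
    push_cast
    ring
  have hmeas : AEStronglyMeasurable
      (Function.uncurry fun (k y : E) => ψ y * Complex.exp (-(t : ℂ) * (‖k‖ : ℂ) ^ 2
          + Complex.I * ((inner ℝ (x - y) k : ℝ) : ℂ))) (volume.prod volume) := by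
    have hcont : Continuous (Function.uncurry fun (k y : E) =>
        ψ y * Complex.exp (-(t : ℂ) * (‖k‖ : ℂ) ^ 2
          + Complex.I * ((inner ℝ (x - y) k : ℝ) : ℂ))) := by
      apply Continuous.mul
      · exact ψ.continuous.comp continuous_snd
      · apply Complex.continuous_exp.comp
        apply Continuous.add
        · exact continuous_const.mul
            ((Complex.continuous_ofReal.comp (continuous_norm.comp continuous_fst)).pow 2)
        · refine continuous_const.mul (Complex.continuous_ofReal.comp ?_)
          exact continuous_inner.comp
            ((continuous_const.sub continuous_snd).prodMk continuous_fst)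
    exact hcont.aestronglyMeasurable
  have hInt : Integrable (Function.uncurry fun (k y : E) =>
      ψ y * Complex.exp (-(t : ℂ) * (‖k‖ : ℂ) ^ 2
        + Complex.I * ((inner ℝ (x - y) k : ℝ) : ℂ))) (volume.prod volume) := by
    refine Integrable.mono' (g := fun p : E × E => rexp (-(t * ‖p.1‖ ^ 2)) * ‖ψ p.2‖)
      ((gauss_integrable d ht).mul_prod (ψ.integrable.norm)) hmeas ?_
    refine Filter.Eventually.of_forall fun p => ?_
    have hre : (-(t : ℂ) * ((‖p.1‖ : ℝ) : ℂ) ^ 2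
        + Complex.I * ((inner ℝ (x - p.2) p.1 : ℝ) : ℂ)).re = -(t * ‖p.1‖ ^ 2) := by
      simp [← Complex.ofReal_pow]
    rw [Function.uncurry]
    rw [norm_mul, Complex.norm_exp, hre]
    exact le_of_eq (mul_comm _ _)
  calc (∫ k : E, ((rexp (-(t * ‖k‖ ^ 2)) : ℝ) : ℂ) * ft d (fun y => ψ y) k *
        Complex.exp (Complex.I * ((inner ℝ k x : ℝ) : ℂ)))
      = ∫ k : E, ∫ y : E, ψ y * Complex.exp (-(t : ℂ) * (‖k‖ : ℂ) ^ 2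
          + Complex.I * ((inner ℝ (x - y) k : ℝ) : ℂ)) :=
        integral_congr_ae (Filter.Eventually.of_forall h1)
    _ = ∫ y : E, ∫ k : E, ψ y * Complex.exp (-(t : ℂ) * (‖k‖ : ℂ) ^ 2
          + Complex.I * ((inner ℝ (x - y) k : ℝ) : ℂ)) := integral_integral_swap hInt
    _ = ∫ y : E, ((((π / t) ^ ((d : ℝ) / 2) * rexp (-(‖x - y‖ ^ 2 / (4 * t)))) : ℝ) : ℂ) * ψ y := by
        refine integral_congr_ae (Filter.Eventually.of_forall fun y => ?_)
        beta_reduce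
        rw [integral_const_mul, gauss_int d ht (x - y)]
        have hoe : Complex.exp (-((‖x - y‖ ^ 2 / (4 * t) : ℝ) : ℂ))
            = ((rexp (-(‖x - y‖ ^ 2 / (4 * t))) : ℝ) : ℂ) := by
          rw [Complex.ofReal_exp, Complex.ofReal_neg]
        rw [hoe]
        push_cast
        ring


lemma fubini1_integrable (s m : ℝ) (hs0 : 0 < s) (hs1 : s < 1) (hm : 0 < m)
    (ψ : SchwartzMap (EuclideanSpace ℝ (Fin d)) ℂ) (x : EuclideanSpace ℝ (Fin d)) :
    Integrable (Function.uncurry fun (k : E) (t : ℝ) =>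
      ((t ^ (-s) * rexp (-((‖k‖ ^ 2 + m ^ 2) * t)) : ℝ) : ℂ) *
        (ft d (fun y => ψ y) k * Complex.exp (Complex.I * ((inner ℝ k x : ℝ) : ℂ))))
      (volume.prod (volume.restrict (Set.Ioi 0))) := by
  have hmeas : AEStronglyMeasurable (Function.uncurry fun (k : E) (t : ℝ) =>
      ((t ^ (-s) * rexp (-((‖k‖ ^ 2 + m ^ 2) * t)) : ℝ) : ℂ) *
        (ft d (fun y => ψ y) k * Complex.exp (Complex.I * ((inner ℝ k x : ℝ) : ℂ))))
      (volume.prod (volume.restrict (Set.Ioi 0))) := by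
    apply Measurable.aestronglyMeasurable
    have hc1 : Measurable fun p : E × ℝ => p.2 ^ (-s) * rexp (-((‖p.1‖ ^ 2 + m ^ 2) * p.2)) := by
      fun_prop
    have hc3 : Continuous fun k : E => ft d (fun y => ψ y) k *
        Complex.exp (Complex.I * ((inner ℝ k x : ℝ) : ℂ)) := by
      refine (ft_continuous d ψ).mul ?_
      exact Complex.continuous_exp.comp (continuous_const.mul
        (Complex.continuous_ofReal.comp
          (continuous_inner.comp (continuous_id.prodMk continuous_const))))
    exact (Complex.measurable_ofReal.comp hc1).mul (hc3.measurable.comp measurable_fst)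
  have hbound : Integrable (fun p : E × ℝ => ‖ft d (fun y => ψ y) p.1‖ *
      (p.2 ^ (-s) * rexp (-(m ^ 2 * p.2))))
      ((volume : Measure (EuclideanSpace ℝ (Fin d))).prod
        ((volume : Measure ℝ).restrict (Set.Ioi 0))) :=
    Integrable.mul_prod ((ft_integrable d ψ).norm)
      (aux_int (by linarith) (by linarith) (by positivity))
  refine Integrable.mono' hbound hmeas ?_
  have hrw : (volume : Measure E).prod ((volume : Measure ℝ).restrict (Set.Ioi 0))
      = ((volume : Measure E).prod volume).restrict (Set.univ ×ˢ Set.Ioi 0) := by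
    rw [← Measure.prod_restrict, Measure.restrict_univ]
  rw [hrw]
  filter_upwards [ae_restrict_mem (MeasurableSet.univ.prod measurableSet_Ioi)] with p hp
  have ht : (0 : ℝ) < p.2 := hp.2
  rcases p with ⟨k, t⟩
  simp only [Function.uncurry]
  rw [norm_mul, norm_mul, Complex.norm_real]
  have he1 : ‖Complex.exp (Complex.I * ((inner ℝ k x : ℝ) : ℂ))‖ = 1 := by
    rw [Complex.norm_exp]
    simp
  rw [he1, mul_one]
  have ha0 : 0 ≤ t ^ (-s) := Real.rpow_nonneg ht.le _
  have hax : t ^ (-s) * rexp (-((‖k‖ ^ 2 + m ^ 2) * t)) ≤ t ^ (-s) * rexp (-(m ^ 2 * t)) := by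
    refine mul_le_mul_of_nonneg_left ?_ ha0
    refine Real.exp_le_exp.2 ?_
    nlinarith [sq_nonneg ‖k‖, ht.le]
  have habs : ‖t ^ (-s) * rexp (-((‖k‖ ^ 2 + m ^ 2) * t))‖
      = t ^ (-s) * rexp (-((‖k‖ ^ 2 + m ^ 2) * t)) :=
    Real.norm_of_nonneg (mul_nonneg ha0 (Real.exp_nonneg _))
  rw [habs, mul_comm]
  exact mul_le_mul_of_nonneg_left hax (norm_nonneg (ft d (fun y => ψ y) k))


set_option maxHeartbeats 2000000 in
lemma fubini2_integrable (s m : ℝ) (hs0 : 0 < s) (hs1 : s < 1) (hm : 0 < m)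
    (ψ : SchwartzMap (EuclideanSpace ℝ (Fin d)) ℂ) (x : EuclideanSpace ℝ (Fin d)) :
    Integrable (Function.uncurry fun (t : ℝ) (y : E) =>
      ((t ^ (-s) * rexp (-(m ^ 2 * t)) *
        ((π / t) ^ ((d : ℝ) / 2) * rexp (-(‖x - y‖ ^ 2 / (4 * t)))) : ℝ) : ℂ) * ψ y)
      (((volume : Measure ℝ).restrict (Set.Ioi 0)).prod volume) := by
  have hπ : (0 : ℝ) < π := pi_pos
  have hcmeas : Measurable fun p : ℝ × E => p.1 ^ (-s) * rexp (-(m ^ 2 * p.1)) *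
      ((π / p.1) ^ ((d : ℝ) / 2) * rexp (-(‖x - p.2‖ ^ 2 / (4 * p.1)))) := by fun_prop
  have hHmeas : AEStronglyMeasurable (Function.uncurry fun (t : ℝ) (y : E) =>
      ((t ^ (-s) * rexp (-(m ^ 2 * t)) *
        ((π / t) ^ ((d : ℝ) / 2) * rexp (-(‖x - y‖ ^ 2 / (4 * t)))) : ℝ) : ℂ) * ψ y)
      (((volume : Measure ℝ).restrict (Set.Ioi 0)).prod volume) := by
    apply Measurable.aestronglyMeasurable
    exact (Complex.measurable_ofReal.comp hcmeas).mul
      (ψ.continuous.measurable.comp measurable_snd)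
  have hc0 : ∀ {t : ℝ}, 0 < t → ∀ y : E, 0 ≤ t ^ (-s) * rexp (-(m ^ 2 * t)) *
      ((π / t) ^ ((d : ℝ) / 2) * rexp (-(‖x - y‖ ^ 2 / (4 * t)))) := by
    intro t ht y
    exact mul_nonneg (mul_nonneg (Real.rpow_nonneg ht.le _) (Real.exp_nonneg _))
      (mul_nonneg (Real.rpow_nonneg (by positivity) _) (Real.exp_nonneg _))
  have hexp1 : ∀ {t : ℝ}, 0 < t → ∀ y : E, rexp (-(‖x - y‖ ^ 2 / (4 * t))) ≤ 1 := by
    intro t ht y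
    rw [Real.exp_le_one_iff]
    have : 0 ≤ ‖x - y‖ ^ 2 / (4 * t) := by positivity
    linarith
  have hsec : ∀ t : ℝ, 0 < t → Integrable (fun y : E =>
      ((t ^ (-s) * rexp (-(m ^ 2 * t)) *
        ((π / t) ^ ((d : ℝ) / 2) * rexp (-(‖x - y‖ ^ 2 / (4 * t)))) : ℝ) : ℂ) * ψ y) volume := by
    intro t ht
    refine Integrable.bdd_mul ψ.integrable ?_
      (c := t ^ (-s) * rexp (-(m ^ 2 * t)) * (π / t) ^ ((d : ℝ) / 2)) (Filter.Eventually.of_forall ?_)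
    · exact (Complex.measurable_ofReal.comp
        (hcmeas.comp measurable_prodMk_left)).aestronglyMeasurable
    · intro y
      rw [Complex.norm_real, Real.norm_of_nonneg (hc0 ht y)]
      have hB : 0 ≤ (π / t) ^ ((d : ℝ) / 2) := Real.rpow_nonneg (by positivity) _
      have hA : 0 ≤ t ^ (-s) * rexp (-(m ^ 2 * t)) :=
        mul_nonneg (Real.rpow_nonneg ht.le _) (Real.exp_nonneg _)
      calc t ^ (-s) * rexp (-(m ^ 2 * t)) *
            ((π / t) ^ ((d : ℝ) / 2) * rexp (-(‖x - y‖ ^ 2 / (4 * t))))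
          ≤ t ^ (-s) * rexp (-(m ^ 2 * t)) * ((π / t) ^ ((d : ℝ) / 2) * 1) :=
            mul_le_mul_of_nonneg_left
              (mul_le_mul_of_nonneg_left (hexp1 ht y) hB) hA
        _ = t ^ (-s) * rexp (-(m ^ 2 * t)) * (π / t) ^ ((d : ℝ) / 2) := by ring
  have hgauss : ∀ t : ℝ, 0 < t →
      Integrable (fun y : E => rexp (-(‖x - y‖ ^ 2 / (4 * t)))) volume := by
    intro t ht
    have h := gauss_shift_integrable d (b := (4 * t)⁻¹) (by positivity) x
    refine h.congr (Filter.Eventually.of_forall fun y => ?_)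
    beta_reduce
    rw [show -((4 * t)⁻¹ * ‖x - y‖ ^ 2) = -(‖x - y‖ ^ 2 / (4 * t)) from by ring]
  set Cψ : ℝ := (SchwartzMap.seminorm ℝ 0 0) ψ with hCψdef
  have hCψ : ∀ y : E, ‖ψ y‖ ≤ Cψ := fun y => SchwartzMap.norm_le_seminorm ℝ ψ y
  have hCψ0 : 0 ≤ Cψ := le_trans (norm_nonneg _) (hCψ 0)
  have hJint : ∀ t : ℝ, 0 < t →
      Integrable (fun y : E => rexp (-(‖x - y‖ ^ 2 / (4 * t))) * ‖ψ y‖) volume := by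
    intro t ht
    refine Integrable.bdd_mul (c := 1) (ψ.integrable.norm) ?_ (Filter.Eventually.of_forall fun y => ?_)
    · exact (by fun_prop : Measurable fun y : E =>
        rexp (-(‖x - y‖ ^ 2 / (4 * t)))).aestronglyMeasurable
    · rw [Real.norm_of_nonneg (Real.exp_nonneg _)]
      exact hexp1 ht y
  have hJ0 : ∀ t : ℝ, 0 ≤ ∫ y : E, rexp (-(‖x - y‖ ^ 2 / (4 * t))) * ‖ψ y‖ :=
    fun t => integral_nonneg fun y => mul_nonneg (Real.exp_nonneg _) (norm_nonneg _)
  have hJle1 : ∀ t : ℝ, 0 < t → (∫ y : E, rexp (-(‖x - y‖ ^ 2 / (4 * t))) * ‖ψ y‖)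
      ≤ Cψ * (4 * π * t) ^ ((d : ℝ) / 2) := by
    intro t ht
    have h3 := integral_mono (hJint t ht) ((hgauss t ht).const_mul Cψ) (fun y => by
      calc rexp (-(‖x - y‖ ^ 2 / (4 * t))) * ‖ψ y‖
          ≤ rexp (-(‖x - y‖ ^ 2 / (4 * t))) * Cψ :=
            mul_le_mul_of_nonneg_left (hCψ y) (Real.exp_nonneg _)
        _ = Cψ * rexp (-(‖x - y‖ ^ 2 / (4 * t))) := by ring)
    calc (∫ y : E, rexp (-(‖x - y‖ ^ 2 / (4 * t))) * ‖ψ y‖)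
        ≤ ∫ y : E, Cψ * rexp (-(‖x - y‖ ^ 2 / (4 * t))) := h3
      _ = Cψ * ∫ y : E, rexp (-(‖x - y‖ ^ 2 / (4 * t))) := integral_const_mul _ _
      _ = Cψ * (4 * π * t) ^ ((d : ℝ) / 2) := by rw [gauss_integral_val d ht x]
  have hJle2 : ∀ t : ℝ, 0 < t → (∫ y : E, rexp (-(‖x - y‖ ^ 2 / (4 * t))) * ‖ψ y‖)
      ≤ ∫ y : E, ‖ψ y‖ := by
    intro t ht
    refine integral_mono (hJint t ht) (ψ.integrable.norm) (fun y => ?_)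
    exact mul_le_of_le_one_left (norm_nonneg _) (hexp1 ht y)
  have hI10 : 0 ≤ ∫ y : E, ‖ψ y‖ := integral_nonneg fun y => norm_nonneg _
  have key : ∀ t : ℝ, 0 < t → (∫ y : E, ‖(Function.uncurry fun (t : ℝ) (y : E) =>
      ((t ^ (-s) * rexp (-(m ^ 2 * t)) *
        ((π / t) ^ ((d : ℝ) / 2) * rexp (-(‖x - y‖ ^ 2 / (4 * t)))) : ℝ) : ℂ) * ψ y) (t, y)‖)
      = t ^ (-s) * rexp (-(m ^ 2 * t)) * (π / t) ^ ((d : ℝ) / 2) *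
          ∫ y : E, rexp (-(‖x - y‖ ^ 2 / (4 * t))) * ‖ψ y‖ := by
    intro t ht
    rw [← integral_const_mul]
    refine integral_congr_ae (Filter.Eventually.of_forall fun y => ?_)
    simp only [Function.uncurry_apply_pair]
    rw [norm_mul, Complex.norm_real, Real.norm_of_nonneg (hc0 ht y)]
    ring
  refine (integrable_prod_iff hHmeas).2 ⟨?_, ?_⟩
  · filter_upwards [ae_restrict_mem measurableSet_Ioi] with t ht
    exact hsec t ht
  · have hsm : StronglyMeasurable fun t : ℝ => ∫ y : E,
        ‖(Function.uncurry fun (t : ℝ) (y : E) =>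
          ((t ^ (-s) * rexp (-(m ^ 2 * t)) *
            ((π / t) ^ ((d : ℝ) / 2) * rexp (-(‖x - y‖ ^ 2 / (4 * t)))) : ℝ) : ℂ) * ψ y) (t, y)‖ := by
      refine StronglyMeasurable.integral_prod_right' (f := fun p : ℝ × E =>
        ‖(Function.uncurry fun (t : ℝ) (y : E) =>
          ((t ^ (-s) * rexp (-(m ^ 2 * t)) *
            ((π / t) ^ ((d : ℝ) / 2) * rexp (-(‖x - y‖ ^ 2 / (4 * t)))) : ℝ) : ℂ) * ψ y) p‖) ?_
      refine Measurable.stronglyMeasurable ?_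
      refine Measurable.norm ?_
      exact (Complex.measurable_ofReal.comp hcmeas).mul
        (ψ.continuous.measurable.comp measurable_snd)
    have hnn : ∀ t : ℝ, 0 ≤ ∫ y : E, ‖(Function.uncurry fun (t : ℝ) (y : E) =>
        ((t ^ (-s) * rexp (-(m ^ 2 * t)) *
          ((π / t) ^ ((d : ℝ) / 2) * rexp (-(‖x - y‖ ^ 2 / (4 * t)))) : ℝ) : ℂ) * ψ y) (t, y)‖ :=
      fun t => integral_nonneg fun y => norm_nonneg _
    have hIoc : IntegrableOn (fun t : ℝ => ∫ y : E,
        ‖(Function.uncurry fun (t : ℝ) (y : E) =>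
          ((t ^ (-s) * rexp (-(m ^ 2 * t)) *
            ((π / t) ^ ((d : ℝ) / 2) * rexp (-(‖x - y‖ ^ 2 / (4 * t)))) : ℝ) : ℂ) * ψ y) (t, y)‖)
        (Set.Ioc (0 : ℝ) 1) volume := by
      have hb1 : IntegrableOn (fun t : ℝ => Cψ * (4 * π ^ 2) ^ ((d : ℝ) / 2) * t ^ (-s))
          (Set.Ioc (0 : ℝ) 1) volume :=
        (((intervalIntegral.integrableOn_Ioo_rpow_iff (s := -s) zero_lt_one).2
          (by linarith)).congr_set_ae Ioo_ae_eq_Ioc.symm).const_mul _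
      refine Integrable.mono' hb1 hsm.aestronglyMeasurable ?_
      rw [ae_restrict_iff' measurableSet_Ioc]
      refine Filter.Eventually.of_forall fun t ht' => ?_
      have ht : (0 : ℝ) < t := ht'.1
      rw [Real.norm_of_nonneg (hnn t), key t ht]
      have hP : 0 ≤ t ^ (-s) := Real.rpow_nonneg ht.le _
      have hQ0 : 0 ≤ rexp (-(m ^ 2 * t)) := Real.exp_nonneg _
      have hQ1 : rexp (-(m ^ 2 * t)) ≤ 1 := by
        rw [Real.exp_le_one_iff]
        nlinarith [ht.le, sq_nonneg m]
      have hR : 0 ≤ (π / t) ^ ((d : ℝ) / 2) := Real.rpow_nonneg (by positivity) _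
      have hW : 0 ≤ Cψ * (4 * π * t) ^ ((d : ℝ) / 2) :=
        mul_nonneg hCψ0 (Real.rpow_nonneg (by positivity) _)
      have hmul : (π / t) ^ ((d : ℝ) / 2) * (4 * π * t) ^ ((d : ℝ) / 2)
          = (4 * π ^ 2) ^ ((d : ℝ) / 2) := by
        rw [← Real.mul_rpow (by positivity) (by positivity)]
        congr 1
        field_simp
      have s1 : t ^ (-s) * rexp (-(m ^ 2 * t)) * (π / t) ^ ((d : ℝ) / 2) *
          (∫ y : E, rexp (-(‖x - y‖ ^ 2 / (4 * t))) * ‖ψ y‖)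
          ≤ t ^ (-s) * rexp (-(m ^ 2 * t)) * (π / t) ^ ((d : ℝ) / 2) *
            (Cψ * (4 * π * t) ^ ((d : ℝ) / 2)) :=
        mul_le_mul_of_nonneg_left (hJle1 t ht) (mul_nonneg (mul_nonneg hP hQ0) hR)
      have hPRW : 0 ≤ t ^ (-s) * (π / t) ^ ((d : ℝ) / 2) * (Cψ * (4 * π * t) ^ ((d : ℝ) / 2)) :=
        mul_nonneg (mul_nonneg hP hR) hW
      have s2 : t ^ (-s) * rexp (-(m ^ 2 * t)) * (π / t) ^ ((d : ℝ) / 2) *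
            (Cψ * (4 * π * t) ^ ((d : ℝ) / 2))
          ≤ t ^ (-s) * (π / t) ^ ((d : ℝ) / 2) * (Cψ * (4 * π * t) ^ ((d : ℝ) / 2)) := by
        nlinarith [hPRW, hQ1, hQ0]
      have s3 : t ^ (-s) * (π / t) ^ ((d : ℝ) / 2) * (Cψ * (4 * π * t) ^ ((d : ℝ) / 2))
          = Cψ * (4 * π ^ 2) ^ ((d : ℝ) / 2) * t ^ (-s) := by
        rw [show Cψ * (4 * π ^ 2) ^ ((d : ℝ) / 2) * t ^ (-s)
          = Cψ * ((π / t) ^ ((d : ℝ) / 2) * (4 * π * t) ^ ((d : ℝ) / 2)) * t ^ (-s) from by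
            rw [hmul]]
        ring
      linarith [s1, s2]
    have hIoi : IntegrableOn (fun t : ℝ => ∫ y : E,
        ‖(Function.uncurry fun (t : ℝ) (y : E) =>
          ((t ^ (-s) * rexp (-(m ^ 2 * t)) *
            ((π / t) ^ ((d : ℝ) / 2) * rexp (-(‖x - y‖ ^ 2 / (4 * t)))) : ℝ) : ℂ) * ψ y) (t, y)‖)
        (Set.Ioi (1 : ℝ)) volume := by
      have hb2 : IntegrableOn (fun t : ℝ => π ^ ((d : ℝ) / 2) * (∫ y : E, ‖ψ y‖) *
          rexp (-(m ^ 2 * t))) (Set.Ioi (1 : ℝ)) volume := by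
        have h := exp_neg_integrableOn_Ioi 1 (show (0 : ℝ) < m ^ 2 by positivity)
        simp_rw [neg_mul] at h
        exact h.const_mul _
      refine Integrable.mono' hb2 hsm.aestronglyMeasurable ?_
      rw [ae_restrict_iff' measurableSet_Ioi]
      refine Filter.Eventually.of_forall fun t ht' => ?_
      have h1t : (1 : ℝ) ≤ t := le_of_lt ht'
      have ht : (0 : ℝ) < t := lt_of_lt_of_le zero_lt_one h1t
      rw [Real.norm_of_nonneg (hnn t), key t ht]
      have hP : 0 ≤ t ^ (-s) := Real.rpow_nonneg ht.le _
      have hP1 : t ^ (-s) ≤ 1 := Real.rpow_le_one_of_one_le_of_nonpos h1t (by linarith)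
      have hQ0 : 0 ≤ rexp (-(m ^ 2 * t)) := Real.exp_nonneg _
      have hR0 : 0 ≤ (π / t) ^ ((d : ℝ) / 2) := Real.rpow_nonneg (by positivity) _
      have hRle : (π / t) ^ ((d : ℝ) / 2) ≤ π ^ ((d : ℝ) / 2) :=
        Real.rpow_le_rpow (by positivity) (div_le_self hπ.le h1t) (by positivity)
      have h2' : t ^ (-s) * rexp (-(m ^ 2 * t)) ≤ 1 * rexp (-(m ^ 2 * t)) :=
        mul_le_mul_of_nonneg_right hP1 hQ0
      have h2b : 0 ≤ 1 * rexp (-(m ^ 2 * t)) := by positivity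
      have h3 : t ^ (-s) * rexp (-(m ^ 2 * t)) * (π / t) ^ ((d : ℝ) / 2)
          ≤ 1 * rexp (-(m ^ 2 * t)) * π ^ ((d : ℝ) / 2) :=
        mul_le_mul h2' hRle hR0 h2b
      have h3b : 0 ≤ 1 * rexp (-(m ^ 2 * t)) * π ^ ((d : ℝ) / 2) := by positivity
      have h4 : t ^ (-s) * rexp (-(m ^ 2 * t)) * (π / t) ^ ((d : ℝ) / 2) *
          (∫ y : E, rexp (-(‖x - y‖ ^ 2 / (4 * t))) * ‖ψ y‖)
          ≤ 1 * rexp (-(m ^ 2 * t)) * π ^ ((d : ℝ) / 2) * (∫ y : E, ‖ψ y‖) :=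
        mul_le_mul h3 (hJle2 t ht) (hJ0 t) h3b
      calc t ^ (-s) * rexp (-(m ^ 2 * t)) * (π / t) ^ ((d : ℝ) / 2) *
          (∫ y : E, rexp (-(‖x - y‖ ^ 2 / (4 * t))) * ‖ψ y‖)
          ≤ 1 * rexp (-(m ^ 2 * t)) * π ^ ((d : ℝ) / 2) * (∫ y : E, ‖ψ y‖) := h4
        _ = π ^ ((d : ℝ) / 2) * (∫ y : E, ‖ψ y‖) * rexp (-(m ^ 2 * t)) := by ring
    have : IntegrableOn (fun t : ℝ => ∫ y : E,
        ‖(Function.uncurry fun (t : ℝ) (y : E) =>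
          ((t ^ (-s) * rexp (-(m ^ 2 * t)) *
            ((π / t) ^ ((d : ℝ) / 2) * rexp (-(‖x - y‖ ^ 2 / (4 * t)))) : ℝ) : ℂ) * ψ y) (t, y)‖)
        (Set.Ioi (0 : ℝ)) volume := by
      rw [← Ioc_union_Ioi_eq_Ioi (zero_le_one (α := ℝ))]
      exact hIoc.union hIoi
    exact this

/-- for `0 < s < 1`, `m > 0` and Schwartz `ψ`,
`s·(2π)^{-d} ∫ (|k|²+m²)^{s−1} ψ̂(k) e^{ik·x} dk = (G ∗ ψ)(x)`. -/
theorem statement15 (hd : 1 ≤ d) (s m : ℝ) (hs0 : 0 < s) (hs1 : s < 1) (hm : 0 < m)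
    (ψ : SchwartzMap (EuclideanSpace ℝ (Fin d)) ℂ) (x : EuclideanSpace ℝ (Fin d)) :
    ((s : ℝ) : ℂ) * ((((2 * π) ^ d)⁻¹ : ℝ) : ℂ) *
        ∫ k, (((‖k‖ ^ 2 + m ^ 2) ^ (s - 1) : ℝ) : ℂ) * ft d (fun y => ψ y) k *
          Complex.exp (Complex.I * ((inner ℝ k x : ℝ) : ℂ))
      = ∫ y, ((Gker d s m (x - y) : ℝ) : ℂ) * ψ y := by
  have hπ : (0 : ℝ) < π := pi_pos
  have hΓ : (0 : ℝ) < Real.Gamma (1 - s) := Real.Gamma_pos_of_pos (by linarith)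
  have h1 : ∀ k : E, (((‖k‖ ^ 2 + m ^ 2) ^ (s - 1) : ℝ) : ℂ) * ft d (fun y => ψ y) k *
      Complex.exp (Complex.I * ((inner ℝ k x : ℝ) : ℂ))
      = (((Real.Gamma (1 - s))⁻¹ : ℝ) : ℂ) *
        ∫ t in Ioi (0 : ℝ), ((t ^ (-s) * rexp (-((‖k‖ ^ 2 + m ^ 2) * t)) : ℝ) : ℂ) *
          (ft d (fun y => ψ y) k * Complex.exp (Complex.I * ((inner ℝ k x : ℝ) : ℂ))) := by
    intro k
    have hA : (0 : ℝ) < ‖k‖ ^ 2 + m ^ 2 := by positivity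
    rw [gamma_inv hs1 hA, Complex.ofReal_mul, mul_assoc, mul_assoc]
    congr 1
    have hoR : ((( ∫ t in Ioi (0 : ℝ), t ^ (-s) * rexp (-((‖k‖ ^ 2 + m ^ 2) * t))) : ℝ) : ℂ)
        = ∫ t in Ioi (0 : ℝ), ((t ^ (-s) * rexp (-((‖k‖ ^ 2 + m ^ 2) * t)) : ℝ) : ℂ) :=
      integral_ofReal.symm
    rw [hoR, ← integral_mul_const]
  have h2 : (∫ k : E, (((‖k‖ ^ 2 + m ^ 2) ^ (s - 1) : ℝ) : ℂ) * ft d (fun y => ψ y) k *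
      Complex.exp (Complex.I * ((inner ℝ k x : ℝ) : ℂ)))
      = (((Real.Gamma (1 - s))⁻¹ : ℝ) : ℂ) *
        ∫ k : E, ∫ t in Ioi (0 : ℝ), ((t ^ (-s) * rexp (-((‖k‖ ^ 2 + m ^ 2) * t)) : ℝ) : ℂ) *
          (ft d (fun y => ψ y) k * Complex.exp (Complex.I * ((inner ℝ k x : ℝ) : ℂ))) := by
    rw [← integral_const_mul]
    exact integral_congr_ae (Filter.Eventually.of_forall fun k => h1 k)
  have h4 : (∫ k : E, ∫ t in Ioi (0 : ℝ),
      ((t ^ (-s) * rexp (-((‖k‖ ^ 2 + m ^ 2) * t)) : ℝ) : ℂ) *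
        (ft d (fun y => ψ y) k * Complex.exp (Complex.I * ((inner ℝ k x : ℝ) : ℂ))))
      = ∫ t in Ioi (0 : ℝ), ∫ k : E,
          ((t ^ (-s) * rexp (-((‖k‖ ^ 2 + m ^ 2) * t)) : ℝ) : ℂ) *
            (ft d (fun y => ψ y) k * Complex.exp (Complex.I * ((inner ℝ k x : ℝ) : ℂ))) :=
    integral_integral_swap (fubini1_integrable d s m hs0 hs1 hm ψ x)
  have h5 : ∀ t ∈ Ioi (0 : ℝ), (∫ k : E,
      ((t ^ (-s) * rexp (-((‖k‖ ^ 2 + m ^ 2) * t)) : ℝ) : ℂ) *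
        (ft d (fun y => ψ y) k * Complex.exp (Complex.I * ((inner ℝ k x : ℝ) : ℂ))))
      = ∫ y : E, ((t ^ (-s) * rexp (-(m ^ 2 * t)) *
          ((π / t) ^ ((d : ℝ) / 2) * rexp (-(‖x - y‖ ^ 2 / (4 * t)))) : ℝ) : ℂ) * ψ y := by
    intro t ht
    have hsplit : ∀ k : E, ((t ^ (-s) * rexp (-((‖k‖ ^ 2 + m ^ 2) * t)) : ℝ) : ℂ) *
        (ft d (fun y => ψ y) k * Complex.exp (Complex.I * ((inner ℝ k x : ℝ) : ℂ)))
        = ((t ^ (-s) * rexp (-(m ^ 2 * t)) : ℝ) : ℂ) *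
          (((rexp (-(t * ‖k‖ ^ 2)) : ℝ) : ℂ) * ft d (fun y => ψ y) k *
            Complex.exp (Complex.I * ((inner ℝ k x : ℝ) : ℂ))) := by
      intro k
      have hr : -((‖k‖ ^ 2 + m ^ 2) * t) = -(m ^ 2 * t) + -(t * ‖k‖ ^ 2) := by ring
      rw [hr, Real.exp_add]
      push_cast
      ring
    calc (∫ k : E, ((t ^ (-s) * rexp (-((‖k‖ ^ 2 + m ^ 2) * t)) : ℝ) : ℂ) *
        (ft d (fun y => ψ y) k * Complex.exp (Complex.I * ((inner ℝ k x : ℝ) : ℂ))))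
        = ∫ k : E, ((t ^ (-s) * rexp (-(m ^ 2 * t)) : ℝ) : ℂ) *
            (((rexp (-(t * ‖k‖ ^ 2)) : ℝ) : ℂ) * ft d (fun y => ψ y) k *
              Complex.exp (Complex.I * ((inner ℝ k x : ℝ) : ℂ))) :=
          integral_congr_ae (Filter.Eventually.of_forall fun k => hsplit k)
      _ = ((t ^ (-s) * rexp (-(m ^ 2 * t)) : ℝ) : ℂ) *
            ∫ k : E, ((rexp (-(t * ‖k‖ ^ 2)) : ℝ) : ℂ) * ft d (fun y => ψ y) k *
              Complex.exp (Complex.I * ((inner ℝ k x : ℝ) : ℂ)) := integral_const_mul _ _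
      _ = ((t ^ (-s) * rexp (-(m ^ 2 * t)) : ℝ) : ℂ) *
            ∫ y : E, (((π / t) ^ ((d : ℝ) / 2) * rexp (-(‖x - y‖ ^ 2 / (4 * t))) : ℝ) : ℂ) *
              ψ y := by rw [step_k d ht ψ x]
      _ = ∫ y : E, ((t ^ (-s) * rexp (-(m ^ 2 * t)) *
            ((π / t) ^ ((d : ℝ) / 2) * rexp (-(‖x - y‖ ^ 2 / (4 * t)))) : ℝ) : ℂ) * ψ y := by
          rw [← integral_const_mul]
          refine integral_congr_ae (Filter.Eventually.of_forall fun y => ?_)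
          beta_reduce
          push_cast
          ring
  have h6 : (∫ t in Ioi (0 : ℝ), ∫ k : E,
      ((t ^ (-s) * rexp (-((‖k‖ ^ 2 + m ^ 2) * t)) : ℝ) : ℂ) *
        (ft d (fun y => ψ y) k * Complex.exp (Complex.I * ((inner ℝ k x : ℝ) : ℂ))))
      = ∫ t in Ioi (0 : ℝ), ∫ y : E, ((t ^ (-s) * rexp (-(m ^ 2 * t)) *
          ((π / t) ^ ((d : ℝ) / 2) * rexp (-(‖x - y‖ ^ 2 / (4 * t)))) : ℝ) : ℂ) * ψ y :=
    setIntegral_congr_fun measurableSet_Ioi (fun t ht => h5 t ht)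
  have h7 : (∫ t in Ioi (0 : ℝ), ∫ y : E, ((t ^ (-s) * rexp (-(m ^ 2 * t)) *
      ((π / t) ^ ((d : ℝ) / 2) * rexp (-(‖x - y‖ ^ 2 / (4 * t)))) : ℝ) : ℂ) * ψ y)
      = ∫ y : E, ∫ t in Ioi (0 : ℝ), ((t ^ (-s) * rexp (-(m ^ 2 * t)) *
          ((π / t) ^ ((d : ℝ) / 2) * rexp (-(‖x - y‖ ^ 2 / (4 * t)))) : ℝ) : ℂ) * ψ y :=
    integral_integral_swap (fubini2_integrable d s m hs0 hs1 hm ψ x)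
  have h8 : ∀ y : E, (∫ t in Ioi (0 : ℝ), ((t ^ (-s) * rexp (-(m ^ 2 * t)) *
      ((π / t) ^ ((d : ℝ) / 2) * rexp (-(‖x - y‖ ^ 2 / (4 * t)))) : ℝ) : ℂ) * ψ y)
      = (((∫ t in Ioi (0 : ℝ), t ^ (-s) * rexp (-(m ^ 2 * t)) *
          ((π / t) ^ ((d : ℝ) / 2) * rexp (-(‖x - y‖ ^ 2 / (4 * t))))) : ℝ) : ℂ) * ψ y := by
    intro y
    have hoR : ((( ∫ t in Ioi (0 : ℝ), t ^ (-s) * rexp (-(m ^ 2 * t)) *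
        ((π / t) ^ ((d : ℝ) / 2) * rexp (-(‖x - y‖ ^ 2 / (4 * t))))) : ℝ) : ℂ)
        = ∫ t in Ioi (0 : ℝ), ((t ^ (-s) * rexp (-(m ^ 2 * t)) *
            ((π / t) ^ ((d : ℝ) / 2) * rexp (-(‖x - y‖ ^ 2 / (4 * t)))) : ℝ) : ℂ) :=
      integral_ofReal.symm
    rw [hoR, ← integral_mul_const]
  rw [h2, h4, h6, h7, ← integral_const_mul, ← integral_const_mul]
  refine integral_congr_ae (Filter.Eventually.of_forall fun y => ?_)
  beta_reduce
  rw [h8 y, ← kernel_eq d s m hs0 hs1 (x - y)]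
  push_cast
  ring

end helpers

end Statement15
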